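/- Let α and β be the two roots in ℂ of the polynomial x² − (1+i)x + 1, and set λ₀ := α and λ₁ := conj β. Then a matrix A ∈ M₂(ℂ) satisfies λ_j · conj(λ_k) · A j k = A j k for all j, k ∈ {0,1} if and only if A 0 0 = 0 and A 1 1 = 0. (Geometrically: the invariant (1,1)-forms on the torus X = ℂ²/Γ that are invariant under the automorphism f = diag(α, conj β) are exactly the complex linear combinations of dz¹∧dz̄² and dz²∧dz̄¹.) -/

import Mathlib

open Complex

/-- Let `α`, `β` be the two roots of `x² − (1+i)x + 1` and set `λ₀ = α`, `λ₁ = conj β`.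
A matrix `A ∈ M₂(ℂ)` satisfies `λ_j · conj(λ_k) · A j k = A j k` for all `j, k` if and
only if `A 0 0 = 0` and `A 1 1 = 0`. -/
theorem invariant_one_one_forms (α β : ℂ)
    (hα : α ^ 2 - (1 + I) * α + 1 = 0)
    (hsum : α + β = 1 + I) (hprod : α * β = 1)
    (A : Matrix (Fin 2) (Fin 2) ℂ) :
    (∀ j k : Fin 2,
        ![α, (starRingEnd ℂ) β] j * (starRingEnd ℂ) (![α, (starRingEnd ℂ) β] k) * A j k
          = A j k) ↔
      A 0 0 = 0 ∧ A 1 1 = 0 := by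
  have hα0 : α ≠ 0 := by
    intro h0; rw [h0, zero_mul] at hprod; exact zero_ne_one hprod
  have hβ0 : β ≠ 0 := by
    intro h0; rw [h0, mul_zero] at hprod; exact zero_ne_one hprod
  have hαc : α * (starRingEnd ℂ) α ≠ 1 := by
    intro h
    have hc : (starRingEnd ℂ) α = β := mul_left_cancel₀ hα0 (h.trans hprod.symm)
    have him : (α + (starRingEnd ℂ) α).im = (1 + I).im := by rw [hc, hsum]
    simp [Complex.add_im, Complex.conj_im] at him
  have hβc : (starRingEnd ℂ) β * β ≠ 1 := by
    intro h
    have hc : (starRingEnd ℂ) β = α := by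
      have := mul_right_cancel₀ hβ0 (h.trans hprod.symm)
      exact this
    have him : ((starRingEnd ℂ) β + β).im = (1 + I).im := by rw [hc, hsum]
    simp [Complex.add_im, Complex.conj_im] at him
  constructor
  · intro h
    constructor
    · have h00 := h 0 0
      simp only [Matrix.cons_val_zero] at h00
      by_contra hA
      exact hαc (mul_right_cancel₀ hA (by linear_combination h00 - A 0 0))
    · have h11 := h 1 1
      simp only [Matrix.cons_val_one, Matrix.head_cons, Matrix.cons_val_zero, Complex.conj_conj] at h11
      by_contra hA
      exact hβc (mul_right_cancel₀ hA (by linear_combination h11 - A 1 1))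
  · rintro ⟨h0, h1⟩ j k
    fin_cases j <;> fin_cases k <;>
      simp [h0, h1, Complex.conj_conj]
    · linear_combination A 0 1 * hprod
    · calc (starRingEnd ℂ) β * (starRingEnd ℂ) α * A 1 0
          = (starRingEnd ℂ) (α * β) * A 1 0 := by ring_nf; rw [← map_mul]; ring_nf
        _ = A 1 0 := by rw [hprod]; simp
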